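/- Let A be an n×n complex matrix with rows a_1,…,a_n, and let A* be its adjugate (transpose of the cofactor matrix). Then every entry in the i-th column of A* has absolute value at most (|a_1|⋯|a_n|)/|a_i|, where |a_k| denotes the Euclidean norm of the row a_k. -/

import Mathlib

open Matrix


set_option maxHeartbeats 1000000 in
/-- **Hadamard's inequality** for complex matrices, phrased with explicit row norms. -/
theorem hadamard_ineq (n : ℕ) (M : Matrix (Fin n) (Fin n) ℂ) :
    ‖M.det‖ ≤ ∏ k, Real.sqrt (∑ l, ‖M k l‖ ^ 2) := by
  classical
  have h : Module.finrank ℂ (EuclideanSpace ℂ (Fin n)) = Fintype.card (Fin n) := by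
    simp
  set f : Fin n → EuclideanSpace ℂ (Fin n) :=
    fun k => (WithLp.equiv 2 (Fin n → ℂ)).symm (M k) with hf
  have hentry : ∀ k l, ‖f k l‖ = ‖M k l‖ := fun k l => rfl
  have hnorm : ∀ k, ‖f k‖ = Real.sqrt (∑ l, ‖M k l‖ ^ 2) := by
    intro k
    rw [EuclideanSpace.norm_eq]
    simp_rw [hentry]
  set B : OrthonormalBasis (Fin n) ℂ (EuclideanSpace ℂ (Fin n)) := @InnerProductSpace.gramSchmidtOrthonormalBasis ℂ (EuclideanSpace ℂ (Fin n)) _ _ _ (Fin n)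
    (inferInstanceAs (LinearOrder (Fin n))) (inferInstanceAs (LocallyFiniteOrderBot (Fin n)))
    (inferInstanceAs (WellFoundedLT (Fin n))) _ _ h f with hB
  have hstd : (EuclideanSpace.basisFun (Fin n) ℂ).toBasis.det f = M.det := by
    rw [Module.Basis.det_apply]
    have : (EuclideanSpace.basisFun (Fin n) ℂ).toBasis.toMatrix f = Mᵀ := by
      ext a b
      simp [Module.Basis.toMatrix_apply, Matrix.transpose_apply, hf]
    rw [this, Matrix.det_transpose]
  have hchain : (EuclideanSpace.basisFun (Fin n) ℂ).toBasis.toMatrix f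
      = (EuclideanSpace.basisFun (Fin n) ℂ).toBasis.toMatrix B.toBasis
        * B.toBasis.toMatrix f :=
    (Module.Basis.toMatrix_mul_toMatrix _ _ _).symm
  have h1 : ‖((EuclideanSpace.basisFun (Fin n) ℂ).toBasis.toMatrix B.toBasis).det‖
      = 1 := by
    have := (EuclideanSpace.basisFun (Fin n) ℂ).det_to_matrix_orthonormalBasis (b := B)
    rw [Module.Basis.det_apply] at this
    simpa using this
  have habs : ‖M.det‖ = ‖B.toBasis.det f‖ := by
    rw [← hstd, Module.Basis.det_apply, hchain, Matrix.det_mul, norm_mul, h1, one_mul,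
      ← Module.Basis.det_apply]
  have hdet : B.toBasis.det f = ∏ k, (inner ℂ (B k) (f k) : ℂ) :=
    @InnerProductSpace.gramSchmidtOrthonormalBasis_det ℂ (EuclideanSpace ℂ (Fin n)) _ _ _ (Fin n)
      (inferInstanceAs (LinearOrder (Fin n))) (inferInstanceAs (LocallyFiniteOrderBot (Fin n)))
      (inferInstanceAs (WellFoundedLT (Fin n))) _ _ h f _
  rw [habs, hdet, norm_prod]
  apply Finset.prod_le_prod
  · intro k _
    positivity
  · intro k _
    rw [← hnorm k]
    calc ‖(inner ℂ (B k) (f k) : ℂ)‖ = ‖(inner ℂ (B k) (f k) : ℂ)‖ := rfl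
      _ ≤ ‖B k‖ * ‖f k‖ := norm_inner_le_norm _ _
      _ = ‖f k‖ := by rw [B.orthonormal.1 k, one_mul]

/-- Every entry in the `i`-th column of the adjugate of an `n × n`
complex matrix `A` has absolute value at most `(|a_1| ⋯ |a_n|) / |a_i|`, i.e. the
product of the Euclidean norms of all rows of `A` other than the `i`-th one. -/
theorem stmt_0 (n : ℕ) (A : Matrix (Fin n) (Fin n) ℂ) (i j : Fin n) :
    ‖A.adjugate j i‖ ≤
      ∏ k ∈ Finset.univ.erase i, Real.sqrt (∑ l, ‖A k l‖ ^ 2) := by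
  classical
  set B := A.updateRow i (Pi.single j 1) with hBdef
  rw [Matrix.adjugate_apply]
  calc ‖(A.updateRow i (Pi.single j 1)).det‖
      ≤ ∏ k, Real.sqrt (∑ l, ‖B k l‖ ^ 2) := hadamard_ineq n B
    _ = (∏ k ∈ Finset.univ.erase i, Real.sqrt (∑ l, ‖B k l‖ ^ 2))
          * Real.sqrt (∑ l, ‖B i l‖ ^ 2) :=
        (Finset.prod_erase_mul _ _ (Finset.mem_univ i)).symm
    _ = ∏ k ∈ Finset.univ.erase i, Real.sqrt (∑ l, ‖A k l‖ ^ 2) := by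
        have hBi : Real.sqrt (∑ l, ‖B i l‖ ^ 2) = 1 := by
          have : ∀ l, ‖B i l‖ ^ 2 = if l = j then 1 else 0 := by
            intro l
            by_cases hl : l = j <;>
              simp [hBdef, Matrix.updateRow_self, Pi.single_apply, hl]
          simp [this]
        rw [hBi, mul_one]
        apply Finset.prod_congr rfl
        intro k hk
        have hki : k ≠ i := (Finset.mem_erase.mp hk).1
        congr 1
        apply Finset.sum_congr rfl
        intro l _
        rw [hBdef, Matrix.updateRow_ne hki]
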